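/- Let α : ℝ → ℝ be a locally Lipschitz extended class K function, let t₀ < t_f be real numbers, and let z : ℝ → ℝ be continuously differentiable on [t₀, t_f) with z'(t) ≥ -α(z(t)) for all t ∈ [t₀, t_f). If z(t₀) > 0, then z(t) > 0 for all t ∈ [t₀, t_f). -/

import Mathlib

open Set

/-- Corollary 1: if `α` is a locally Lipschitz extended class K function and `z` is
continuously differentiable on `[t₀, t_f)` with `z' ≥ -α ∘ z` there, then positivity of
`z` at `t₀` is preserved on all of `[t₀, t_f)`. -/
theorem positivity_preserved_of_diff_ineq
    (α : ℝ → ℝ) (hα_lip : LocallyLipschitz α) (hα_mono : StrictMono α) (hα_zero : α 0 = 0)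
    (t₀ t_f : ℝ) (ht : t₀ < t_f) (z : ℝ → ℝ)
    (hz : ContDiffOn ℝ 1 z (Set.Ico t₀ t_f))
    (hineq : ∀ t ∈ Set.Ico t₀ t_f, derivWithin z (Set.Ico t₀ t_f) t ≥ -α (z t))
    (hz₀ : 0 < z t₀) :
    ∀ t ∈ Set.Ico t₀ t_f, 0 < z t := by
  by_contra hcon
  push_neg at hcon
  obtain ⟨s₀, hs₀mem, hs₀⟩ := hcon
  set S : Set ℝ := {t | t ∈ Set.Ico t₀ t_f ∧ z t ≤ 0} with hSdef
  have hSne : S.Nonempty := ⟨s₀, hs₀mem, hs₀⟩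
  have hSbdd : BddBelow S := ⟨t₀, fun x hx => hx.1.1⟩
  set t₁ : ℝ := sInf S with ht₁def
  have ht₁ge : t₀ ≤ t₁ := le_csInf hSne (fun x hx => hx.1.1)
  have ht₁lt : t₁ < t_f := lt_of_le_of_lt (csInf_le hSbdd ⟨hs₀mem, hs₀⟩) hs₀mem.2
  have ht₁Ico : t₁ ∈ Set.Ico t₀ t_f := ⟨ht₁ge, ht₁lt⟩
  have hSsub : S ⊆ Set.Ico t₀ t_f := fun x hx => hx.1
  -- z is positive strictly before t₁
  have hpos : ∀ s, t₀ ≤ s → s < t₁ → 0 < z s := by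
    intro s hs₀' hs₁
    by_contra h
    push_neg at h
    have : s ∈ S := ⟨⟨hs₀', lt_of_lt_of_le hs₁ ht₁lt.le⟩, h⟩
    exact absurd (csInf_le hSbdd this) (not_le.mpr hs₁)
  -- z t₁ ≤ 0
  have hcontz : ContinuousOn z (Set.Ico t₀ t_f) := hz.continuousOn
  have hzt₁le : z t₁ ≤ 0 := by
    have hclos : t₁ ∈ closure S := csInf_mem_closure hSne hSbdd
    haveI : (nhdsWithin t₁ S).NeBot := mem_closure_iff_nhdsWithin_neBot.mp hclos
    have hc : Filter.Tendsto z (nhdsWithin t₁ S) (nhds (z t₁)) :=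
      (hcontz t₁ ht₁Ico).mono hSsub
    exact le_of_tendsto hc (Filter.eventually_of_mem self_mem_nhdsWithin fun x hx => hx.2)
  have ht₀₁ : t₀ < t₁ := by
    rcases lt_or_eq_of_le ht₁ge with h | h
    · exact h
    · exfalso; rw [← h] at hzt₁le; linarith
  -- z t₁ ≥ 0
  have hzt₁ge : 0 ≤ z t₁ := by
    haveI : (nhdsWithin t₁ (Set.Ico t₀ t₁)).NeBot := by
      apply mem_closure_iff_nhdsWithin_neBot.mp
      rw [closure_Ico (ne_of_lt ht₀₁)]
      exact ⟨ht₀₁.le, le_refl _⟩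
    have hc : Filter.Tendsto z (nhdsWithin t₁ (Set.Ico t₀ t₁)) (nhds (z t₁)) :=
      (hcontz t₁ ht₁Ico).mono (Set.Ico_subset_Ico_right ht₁lt.le)
    exact ge_of_tendsto hc (Filter.eventually_of_mem self_mem_nhdsWithin
      fun x hx => (hpos x hx.1 hx.2).le)
  have hzt₁ : z t₁ = 0 := le_antisymm hzt₁le hzt₁ge
  -- Lipschitz bound near 0 : α y ≤ K y on [0, δ]
  obtain ⟨K₀, u, hu_nhds, hK⟩ := hα_lip 0
  set K : ℝ := (K₀ : ℝ) with hKdef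
  have hKnn : 0 ≤ K := K₀.coe_nonneg
  obtain ⟨ε, hε, hball⟩ := Metric.mem_nhds_iff.mp hu_nhds
  set δ : ℝ := ε / 2 with hδdef
  have hδpos : 0 < δ := by positivity
  have hαbound : ∀ y : ℝ, 0 ≤ y → y ≤ δ → α y ≤ K * y := by
    intro y hy0 hyδ
    have hymem : y ∈ u := hball (by simp [Real.norm_eq_abs, abs_of_nonneg hy0]; linarith)
    have h0mem : (0 : ℝ) ∈ u := hball (by simp [hε])
    have := hK.dist_le_mul y hymem 0 h0mem
    rw [Real.dist_eq, Real.dist_eq, hα_zero, sub_zero, sub_zero, abs_of_nonneg hy0] at this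
    calc α y ≤ |α y| := le_abs_self _
      _ ≤ K * y := this
  -- choose t₂ < t₁ with z < δ on [t₂, t₁]
  have hsmall : ∀ᶠ x in nhdsWithin t₁ (Set.Ico t₀ t_f), z x < δ := by
    have hc : Filter.Tendsto z (nhdsWithin t₁ (Set.Ico t₀ t_f)) (nhds (z t₁)) :=
      hcontz t₁ ht₁Ico
    have : z t₁ < δ := by rw [hzt₁]; exact hδpos
    exact hc.eventually (Filter.tendsto_id.eventually_lt_const this)
  rw [eventually_nhdsWithin_iff] at hsmall
  obtain ⟨ε', hε', hε'h⟩ := Metric.eventually_nhds_iff.mp hsmall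
  set t₂ : ℝ := max t₀ (t₁ - ε' / 2) with ht₂def
  have ht₂lt : t₂ < t₁ := max_lt ht₀₁ (by linarith)
  have ht₂ge : t₀ ≤ t₂ := le_max_left _ _
  have hIccsub : Set.Icc t₂ t₁ ⊆ Set.Ico t₀ t_f := fun x hx =>
    ⟨le_trans ht₂ge hx.1, lt_of_le_of_lt hx.2 ht₁lt⟩
  have hzsmall : ∀ x ∈ Set.Icc t₂ t₁, z x < δ := by
    intro x hx
    refine hε'h ?_ (hIccsub hx)
    rw [Real.dist_eq, abs_sub_lt_iff]
    have h1 : t₁ - ε' / 2 ≤ t₂ := le_max_right _ _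
    have h2 := hx.1
    have h3 := hx.2
    constructor <;> linarith
  -- g(t) = z t * exp (K t) is monotone on [t₂, t₁]
  set g : ℝ → ℝ := fun t => z t * Real.exp (K * t) with hgdef
  have hgc : ContinuousOn g (Set.Icc t₂ t₁) :=
    (hcontz.mono hIccsub).mul (Real.continuous_exp.comp (continuous_const.mul continuous_id)).continuousOn
  have hgd : ∀ x ∈ interior (Set.Icc t₂ t₁), HasDerivAt g
      ((derivWithin z (Set.Ico t₀ t_f) x + K * z x) * Real.exp (K * x)) x := by
    intro x hx
    rw [interior_Icc] at hx
    have hxmem : x ∈ Set.Ico t₀ t_f := hIccsub ⟨hx.1.le, hx.2.le⟩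
    have hnhds : Set.Ico t₀ t_f ∈ nhds x :=
      Ico_mem_nhds (lt_of_le_of_lt ht₂ge hx.1) hxmem.2
    have hzdiff : DifferentiableAt ℝ z x :=
      ((hz.differentiableOn one_ne_zero) x hxmem).differentiableAt hnhds
    have hderiv_eq : derivWithin z (Set.Ico t₀ t_f) x = deriv z x :=
      derivWithin_of_mem_nhds hnhds
    have hexp : HasDerivAt (fun t => Real.exp (K * t)) (K * Real.exp (K * x)) x := by
      have h1 : HasDerivAt (fun t : ℝ => K * t) K x := by
        simpa using (hasDerivAt_id x).const_mul K
      have := h1.exp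
      rwa [mul_comm] at this
    have := hzdiff.hasDerivAt.mul hexp
    rw [← hderiv_eq] at this
    refine this.congr_deriv ?_
    ring
  have hgderiv_nonneg : ∀ x ∈ interior (Set.Icc t₂ t₁), 0 ≤ deriv g x := by
    intro x hx
    rw [(hgd x hx).deriv]
    rw [interior_Icc] at hx
    have hxmem : x ∈ Set.Ico t₀ t_f := hIccsub ⟨hx.1.le, hx.2.le⟩
    have hzx_pos : 0 < z x := hpos x hxmem.1 hx.2
    have hzx_small : z x < δ := hzsmall x ⟨hx.1.le, hx.2.le⟩
    have h1 : derivWithin z (Set.Ico t₀ t_f) x ≥ -α (z x) := hineq x hxmem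
    have h2 : α (z x) ≤ K * z x := hαbound (z x) hzx_pos.le hzx_small.le
    have hexp_pos : 0 < Real.exp (K * x) := Real.exp_pos _
    nlinarith
  have hmono : MonotoneOn g (Set.Icc t₂ t₁) :=
    monotoneOn_of_deriv_nonneg (convex_Icc t₂ t₁) hgc
      (fun x hx => (hgd x hx).differentiableAt.differentiableWithinAt) hgderiv_nonneg
  have hle : g t₂ ≤ g t₁ :=
    hmono ⟨le_refl _, ht₂lt.le⟩ ⟨ht₂lt.le, le_refl _⟩ ht₂lt.le
  have hgt₂ : 0 < g t₂ := mul_pos (hpos t₂ ht₂ge ht₂lt) (Real.exp_pos _)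
  have hgt₁ : g t₁ = 0 := by simp [hgdef, hzt₁]
  linarith
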